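/- Let d^D : Γ(Λ^k D*) → Γ(Λ^{k+1} D*) be an almost differential on a vector bundle τ_D : D → Q, i.e., an R-linear degree-1 operator satisfying d^D(α∧β) = d^Dα ∧ β + (−1)^k α ∧ d^Dβ. Define ρ(X)(f) = (d^D f)(X) and α(⟦X,Y⟧) = d^D(α(Y))(X) − d^D(α(X))(Y) − (d^D α)(X,Y) for sections X, Y of D, sections α of D*, and f ∈ C^∞(Q). Then (⟦·,·⟧, ρ) is a skew-symmetric algebroid structure on D. -/
import Mathlib


/- STATEMENT 3.
An almost differential on a vector bundle τ_D : D → Q is an ℝ-linear degree-one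
operator d^D on forms (sections of Λ^k D*, modelled as alternating C^∞(Q)-multilinear
maps on tuples of sections of D) satisfying the graded Leibniz rule
d^D(α∧β) = d^Dα ∧ β + (−1)^k α ∧ d^Dβ.  Defining ρ(X)(f) = (d^D f)(X) and
α(⟦X,Y⟧) = d^D(α(Y))(X) − d^D(α(X))(Y) − (d^Dα)(X,Y), the pair (⟦·,·⟧, ρ) is a
skew-symmetric algebroid structure on D. -/

section

variable {Q : Type*} {D : Q → Type*} [∀ q, AddCommGroup (D q)] [∀ q, Module ℝ (D q)]

/-- A raw `k`-form: a map from `k`-tuples of sections of `D` to functions on `Q`. -/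
abbrev RawForm (D : Q → Type*) [∀ q, AddCommGroup (D q)] [∀ q, Module ℝ (D q)] (k : ℕ) :=
  (Fin k → (∀ q, D q)) → Q → ℝ

/-- A raw form is a genuine section of Λ^k D*: it is C^∞(Q)-multilinear and
alternating in its arguments. -/
def IsForm {k : ℕ} (ω : RawForm D k) : Prop :=
  (∀ (X : Fin k → ∀ q, D q) (i : Fin k) (Y Z : ∀ q, D q),
      ω (Function.update X i (fun q => Y q + Z q)) =
        ω (Function.update X i Y) + ω (Function.update X i Z)) ∧
  (∀ (X : Fin k → ∀ q, D q) (i : Fin k) (f : Q → ℝ) (Y : ∀ q, D q),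
      ω (Function.update X i (fun q => f q • Y q)) = f * ω (Function.update X i Y)) ∧
  (∀ (X : Fin k → ∀ q, D q) (i j : Fin k), i ≠ j → X i = X j → ω X = 0)

/-- The wedge product of raw forms (antisymmetrization formula). -/
noncomputable def wedge {k r : ℕ} (ω : RawForm D k) (η : RawForm D r) : RawForm D (k + r) :=
  fun X q =>
    ((k.factorial * r.factorial : ℝ))⁻¹ *
      ∑ σ : Equiv.Perm (Fin (k + r)), ((Equiv.Perm.sign σ : ℤ) : ℝ) *
        (ω (fun i => X (σ (Fin.castAdd r i))) q * η (fun j => X (σ (Fin.natAdd k j))) q)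


-- ===== auxiliary lemmas =====

lemma isForm_zero (ω : RawForm D 0) : IsForm ω :=
  ⟨fun _ i => i.elim0, fun _ i => i.elim0, fun _ i => i.elim0⟩

lemma upd1 (X : Fin 1 → ∀ q, D q) (Z : ∀ q, D q) : Function.update X 0 Z = fun _ => Z := by
  funext i; have : i = 0 := Subsingleton.elim _ _; subst this; simp

lemma of_add {α : RawForm D 1} (h : IsForm α) (A B : ∀ q, D q) :
    α (fun _ => fun q => A q + B q) = α (fun _ => A) + α (fun _ => B) := by
  have := h.1 (fun _ => A) 0 A B
  rwa [upd1, upd1, upd1] at this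

lemma of_smul {α : RawForm D 1} (h : IsForm α) (f : Q → ℝ) (A : ∀ q, D q) :
    α (fun _ => fun q => f q • A q) = f * α (fun _ => A) := by
  have := h.2.1 (fun _ => A) 0 f A
  rwa [upd1, upd1] at this

lemma upd20 (A B C : ∀ q, D q) :
    Function.update (Fin.cons A (fun _ => B) : Fin 2 → ∀ q, D q) 0 C = Fin.cons C (fun _ => B) := by
  funext i; fin_cases i <;> simp

lemma upd21 (A B C : ∀ q, D q) :
    Function.update (Fin.cons A (fun _ => B) : Fin 2 → ∀ q, D q) 1 C = Fin.cons A (fun _ => C) := by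
  funext i; fin_cases i <;> simp

lemma tf_addl {ω : RawForm D 2} (h : IsForm ω) (A B C : ∀ q, D q) :
    ω (Fin.cons (fun q => A q + B q) (fun _ => C)) =
      ω (Fin.cons A (fun _ => C)) + ω (Fin.cons B (fun _ => C)) := by
  have := h.1 (Fin.cons A (fun _ => C)) 0 A B
  rwa [upd20, upd20, upd20] at this

lemma tf_addr {ω : RawForm D 2} (h : IsForm ω) (A B C : ∀ q, D q) :
    ω (Fin.cons A (fun _ => fun q => B q + C q)) =
      ω (Fin.cons A (fun _ => B)) + ω (Fin.cons A (fun _ => C)) := by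
  have := h.1 (Fin.cons A (fun _ => B)) 1 B C
  rwa [upd21, upd21, upd21] at this

lemma tf_smull {ω : RawForm D 2} (h : IsForm ω) (f : Q → ℝ) (A B : ∀ q, D q) :
    ω (Fin.cons (fun q => f q • A q) (fun _ => B)) = f * ω (Fin.cons A (fun _ => B)) := by
  have := h.2.1 (Fin.cons A (fun _ => B)) 0 f A
  rwa [upd20, upd20] at this

lemma tf_smulr {ω : RawForm D 2} (h : IsForm ω) (f : Q → ℝ) (A B : ∀ q, D q) :
    ω (Fin.cons A (fun _ => fun q => f q • B q)) = f * ω (Fin.cons A (fun _ => B)) := by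
  have := h.2.1 (Fin.cons A (fun _ => B)) 1 f B
  rwa [upd21, upd21] at this

lemma tf_alt {ω : RawForm D 2} (h : IsForm ω) (A : ∀ q, D q) :
    ω (Fin.cons A (fun _ => A)) = 0 :=
  h.2.2 _ 0 1 (by decide) (by simp)

lemma tf_antisym {ω : RawForm D 2} (h : IsForm ω) (A B : ∀ q, D q) :
    ω (Fin.cons A (fun _ => B)) + ω (Fin.cons B (fun _ => A)) = 0 := by
  have h0 : ω (Fin.cons (fun q => A q + B q) (fun _ => fun q => A q + B q)) = 0 :=
    h.2.2 _ 0 1 (by decide) (by simp)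
  rw [tf_addl h, tf_addr h, tf_addr h, tf_alt h, tf_alt h] at h0
  funext q
  have := congrFun h0 q
  simp only [Pi.add_apply, Pi.zero_apply] at this ⊢
  linarith

lemma sep (V W : ∀ q, D q)
    (h : ∀ α : RawForm D 1, IsForm α → α (fun _ => V) = α (fun _ => W)) : V = W := by
  funext q0
  have key : ∀ L : D q0 →ₗ[ℝ] ℝ, L (V q0) = L (W q0) := by
    intro L
    classical
    set α : RawForm D 1 := fun X q => if q = q0 then L (X 0 q0) else 0 with hα
    have hf : IsForm α := by
      refine ⟨?_, ?_, ?_⟩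
      · intro X i Y Z
        have hi : i = 0 := Subsingleton.elim _ _
        subst hi
        funext q
        by_cases hq : q = q0 <;> simp [α, hq, upd1]
      · intro X i f Y
        have hi : i = 0 := Subsingleton.elim _ _
        subst hi
        funext q
        by_cases hq : q = q0 <;> simp [α, hq, upd1]
      · intro X i j hij
        exact absurd (Subsingleton.elim i j) hij
    have h2 := congrFun (h α hf) q0
    simpa [α] using h2
  rw [← sub_eq_zero, ← Module.forall_dual_apply_eq_zero_iff ℝ]
  intro L; simp [map_sub, key L]

instance : Subsingleton (Fin (0+0)) := by norm_num; infer_instance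
instance : Subsingleton (Fin (1+0)) := by norm_num; infer_instance
instance : Subsingleton (Fin (0+1)) := by norm_num; infer_instance

lemma wedge00 (f g : Q → ℝ) :
    (wedge (fun _ => f) (fun _ => g) : RawForm D (0 + 0)) = fun _ => f * g := by
  funext X q
  simp [wedge, Fintype.sum_subsingleton _ (1 : Equiv.Perm (Fin (0 + 0)))]

lemma wedge10 (β : RawForm D 1) (g : Q → ℝ) (X : ∀ q, D q) :
    (wedge β (fun _ => g) : RawForm D (1 + 0)) (fun _ => X) = fun q => β (fun _ => X) q * g q := by
  funext q
  simp [wedge, Fintype.sum_subsingleton _ (1 : Equiv.Perm (Fin (1 + 0)))]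

lemma wedge01 (f : Q → ℝ) (β : RawForm D 1) (X : ∀ q, D q) :
    (wedge (fun _ => f) β : RawForm D (0 + 1)) (fun _ => X) = fun q => f q * β (fun _ => X) q := by
  funext q
  simp [wedge, Fintype.sum_subsingleton _ (1 : Equiv.Perm (Fin (0 + 1)))]

theorem stmt3
    -- the almost differential d^D
    (d : ∀ k : ℕ, RawForm D k → RawForm D (k + 1))
    -- it maps forms to forms
    (hpres : ∀ (k : ℕ) (ω : RawForm D k), IsForm ω → IsForm (d k ω))
    -- ℝ-linearity
    (hadd : ∀ (k : ℕ) (ω η : RawForm D k), IsForm ω → IsForm η → d k (ω + η) = d k ω + d k η)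
    (hsmul : ∀ (k : ℕ) (r : ℝ) (ω : RawForm D k), IsForm ω → d k (r • ω) = r • d k ω)
    -- graded Leibniz rule: d^D(α∧β) = d^Dα ∧ β + (−1)^k α ∧ d^Dβ
    (hleib : ∀ (k r : ℕ) (ω : RawForm D k) (η : RawForm D r), IsForm ω → IsForm η →
      ∀ X : Fin (k + r + 1) → ∀ q, D q,
        d (k + r) (wedge ω η) X =
          wedge (d k ω) η (fun a => X (Fin.cast (by omega) a)) +
            ((-1 : ℝ) ^ k) • wedge ω (d r η) X)
    -- the bracket ⟦·,·⟧ defined by α(⟦X,Y⟧) = d^D(α(Y))(X) − d^D(α(X))(Y) − (d^Dα)(X,Y)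
    (br : (∀ q, D q) → (∀ q, D q) → (∀ q, D q))
    (hbr : ∀ (α : RawForm D 1), IsForm α → ∀ X Y : ∀ q, D q,
      α (fun _ => br X Y) =
        d 0 (fun _ => α (fun _ => Y)) (fun _ => X) -
          d 0 (fun _ => α (fun _ => X)) (fun _ => Y) -
            d 1 α (Fin.cons X (fun _ => Y)))
    -- the anchor ρ defined by ρ(X)(f) = (d^D f)(X)
    (ρ : (∀ q, D q) → (Q → ℝ) → (Q → ℝ))
    (hρ : ∀ (X : ∀ q, D q) (f : Q → ℝ), ρ X f = d 0 (fun _ => f) (fun _ => X)) :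
    -- then (⟦·,·⟧, ρ) is a skew-symmetric algebroid structure on D:
    -- skew-symmetry and ℝ-bilinearity of ⟦·,·⟧
    (∀ X Y, br X Y = - br Y X) ∧
    (∀ X Y Z, br (X + Y) Z = br X Z + br Y Z) ∧
    (∀ (r : ℝ) X Y, br (r • X) Y = r • br X Y) ∧
    -- ρ is induced by a vector bundle morphism D → TQ: it is C^∞(Q)-linear in the
    -- section argument and each ρ(X) is an ℝ-linear derivation of C^∞(Q)
    (∀ X Y f, ρ (X + Y) f = ρ X f + ρ Y f) ∧
    (∀ (g : Q → ℝ) X f, ρ (fun q => g q • X q) f = g * ρ X f) ∧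
    (∀ X f g, ρ X (f + g) = ρ X f + ρ X g) ∧
    (∀ X (r : ℝ) f, ρ X (r • f) = r • ρ X f) ∧
    (∀ X f g, ρ X (f * g) = f * ρ X g + g * ρ X f) ∧
    -- the Leibniz rule ⟦X, fY⟧ = f⟦X,Y⟧ + ρ(X)(f)Y
    (∀ X Y (f : Q → ℝ),
      br X (fun q => f q • Y q) = fun q => f q • br X Y q + ρ X f q • Y q) := by
  -- derivation property of d 0
  have hder : ∀ (f g : Q → ℝ) (X : ∀ q, D q),
      d 0 (fun _ => f * g) (fun _ => X) =
        fun q => d 0 (fun _ => f) (fun _ => X) q * g q +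
          f q * d 0 (fun _ => g) (fun _ => X) q := by
    intro f g X
    have h := hleib 0 0 (fun _ => f) (fun _ => g) (isForm_zero _) (isForm_zero _) (fun _ => X)
    have h' : d 0 (fun _ => f * g) (fun _ => X) =
        (wedge (d 0 (fun _ => f)) (fun _ => g) : RawForm D (1 + 0)) (fun _ => X) +
          ((-1 : ℝ) ^ 0) • (wedge (fun _ => f) (d 0 (fun _ => g)) : RawForm D (0 + 1))
            (fun _ => X) := by
      rw [← wedge00 f g]; exact h
    rw [wedge10, wedge01] at h'
    funext q
    have := congrFun h' q
    simp only [Pi.add_apply, Pi.smul_apply, pow_zero, one_smul, smul_eq_mul] at this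
    linarith
  have h0 : ∀ f : Q → ℝ, IsForm (fun _ => f : RawForm D 0) := fun f => isForm_zero _
  have h1 : ∀ f : Q → ℝ, IsForm (d 0 (fun _ => f)) := fun f => hpres 0 _ (isForm_zero _)
  refine ⟨?_, ?_, ?_, ?_, ?_, ?_, ?_, ?_, ?_⟩
  · -- skew-symmetry
    intro X Y
    apply sep
    intro α hα
    have e1 := hbr α hα X Y
    have e2 := hbr α hα Y X
    have e3 : d 1 α (Fin.cons X (fun _ => Y)) + d 1 α (Fin.cons Y (fun _ => X)) = 0 :=
      tf_antisym (hpres 1 α hα) X Y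
    have e4 : α (fun _ => -br Y X) = (fun _ => (-1 : ℝ)) * α (fun _ => br Y X) := by
      rw [show (fun _ : Fin 1 => -br Y X) =
          (fun _ => fun q => (fun _ : Q => (-1 : ℝ)) q • br Y X q) from by
        funext i q; simp]
      exact of_smul hα _ _
    rw [e4]
    funext q
    have c1 := congrFun e1 q
    have c2 := congrFun e2 q
    have c3 := congrFun e3 q
    simp only [Pi.sub_apply, Pi.add_apply, Pi.mul_apply, Pi.zero_apply] at c1 c2 c3 ⊢
    linarith
  · -- additivity of the bracket
    intro X Y Z
    apply sep
    intro α hα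
    have e1 := hbr α hα (X + Y) Z
    have e2 := hbr α hα X Z
    have e3 := hbr α hα Y Z
    have eA : d 0 (fun _ => α (fun _ => Z)) (fun _ => X + Y) =
        d 0 (fun _ => α (fun _ => Z)) (fun _ => X) +
          d 0 (fun _ => α (fun _ => Z)) (fun _ => Y) := of_add (h1 _) X Y
    have eB0 : α (fun _ => X + Y) = α (fun _ => X) + α (fun _ => Y) := of_add hα X Y
    have eB : d 0 (fun _ => α (fun _ => X + Y)) =
        d 0 (fun _ => α (fun _ => X)) + d 0 (fun _ => α (fun _ => Y)) := by
      rw [eB0]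
      exact hadd 0 _ _ (isForm_zero _) (isForm_zero _)
    have eC : d 1 α (Fin.cons (X + Y) (fun _ => Z)) =
        d 1 α (Fin.cons X (fun _ => Z)) + d 1 α (Fin.cons Y (fun _ => Z)) :=
      tf_addl (hpres 1 α hα) X Y Z
    have eR : α (fun _ => br X Z + br Y Z) =
        α (fun _ => br X Z) + α (fun _ => br Y Z) := of_add hα _ _
    rw [eR]
    funext q
    have c1 := congrFun e1 q
    have c2 := congrFun e2 q
    have c3 := congrFun e3 q
    have cA := congrFun eA q
    have cB := congrFun (congrFun eB (fun _ => Z)) q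
    have cC := congrFun eC q
    simp only [Pi.sub_apply, Pi.add_apply] at c1 c2 c3 cA cB cC ⊢
    linarith
  · -- homogeneity of the bracket
    intro r X Y
    apply sep
    intro α hα
    have e1 := hbr α hα (r • X) Y
    have e2 := hbr α hα X Y
    have eA : d 0 (fun _ => α (fun _ => Y)) (fun _ => r • X) =
        (fun _ => r) * d 0 (fun _ => α (fun _ => Y)) (fun _ => X) :=
      of_smul (h1 _) (fun _ => r) X
    have eB0 : α (fun _ => r • X) = (fun _ => r) * α (fun _ => X) :=
      of_smul hα (fun _ => r) X
    have eB : d 0 (fun _ => α (fun _ => r • X)) =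
        r • d 0 (fun _ => α (fun _ => X)) := by
      rw [eB0]
      exact hsmul 0 r _ (isForm_zero _)
    have eC : d 1 α (Fin.cons (r • X) (fun _ => Y)) =
        (fun _ => r) * d 1 α (Fin.cons X (fun _ => Y)) :=
      tf_smull (hpres 1 α hα) (fun _ => r) X Y
    have eR : α (fun _ => r • br X Y) = (fun _ => r) * α (fun _ => br X Y) :=
      of_smul hα (fun _ => r) (br X Y)
    rw [eR]
    funext q
    have c1 := congrFun e1 q
    have c2 := congrFun e2 q
    have cA := congrFun eA q
    have cB := congrFun (congrFun eB (fun _ => Y)) q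
    have cC := congrFun eC q
    simp only [Pi.sub_apply, Pi.add_apply, Pi.mul_apply, Pi.smul_apply, smul_eq_mul]
      at c1 c2 cA cB cC ⊢
    linear_combination c1 + cA - cB - cC - r * c2
  · -- additivity of ρ in the section
    intro X Y f
    rw [hρ, hρ, hρ]
    exact of_add (h1 _) X Y
  · -- C∞-linearity of ρ in the section
    intro g X f
    rw [hρ, hρ]
    exact of_smul (h1 _) g X
  · -- additivity of ρ in the function
    intro X f g
    rw [hρ, hρ, hρ]
    have : d 0 (fun _ => f + g : RawForm D 0) =
        d 0 (fun _ => f) + d 0 (fun _ => g) :=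
      hadd 0 (fun _ => f) (fun _ => g) (isForm_zero _) (isForm_zero _)
    rw [this]
    rfl
  · -- ℝ-homogeneity of ρ in the function
    intro X r f
    rw [hρ, hρ]
    have : d 0 (fun _ => r • f : RawForm D 0) = r • d 0 (fun _ => f) :=
      hsmul 0 r (fun _ => f) (isForm_zero _)
    rw [this]
    rfl
  · -- derivation property of ρ
    intro X f g
    rw [hρ, hρ, hρ]
    funext q
    have := congrFun (hder f g X) q
    simp only [Pi.add_apply, Pi.mul_apply] at this ⊢
    linarith
  · -- Leibniz rule for the bracket
    intro X Y f
    apply sep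
    intro α hα
    have e1 := hbr α hα X (fun q => f q • Y q)
    have e2 := hbr α hα X Y
    have eA0 : α (fun _ => fun q => f q • Y q) = f * α (fun _ => Y) := of_smul hα f Y
    have eA : d 0 (fun _ => α (fun _ => fun q => f q • Y q)) (fun _ => X) =
        fun q => d 0 (fun _ => f) (fun _ => X) q * α (fun _ => Y) q +
          f q * d 0 (fun _ => α (fun _ => Y)) (fun _ => X) q := by
      rw [eA0]
      exact hder f (α (fun _ => Y)) X
    have eB : d 0 (fun _ => α (fun _ => X)) (fun _ => fun q => f q • Y q) =
        f * d 0 (fun _ => α (fun _ => X)) (fun _ => Y) := of_smul (h1 _) f Y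
    have eC : d 1 α (Fin.cons X (fun _ => fun q => f q • Y q)) =
        f * d 1 α (Fin.cons X (fun _ => Y)) := tf_smulr (hpres 1 α hα) f X Y
    have eR1 : α (fun _ => fun q => f q • br X Y q + ρ X f q • Y q) =
        α (fun _ => fun q => f q • br X Y q) + α (fun _ => fun q => ρ X f q • Y q) :=
      of_add hα _ _
    have eR2 : α (fun _ => fun q => f q • br X Y q) = f * α (fun _ => br X Y) :=
      of_smul hα f (br X Y)
    have eR3 : α (fun _ => fun q => ρ X f q • Y q) = ρ X f * α (fun _ => Y) :=
      of_smul hα (ρ X f) Y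
    rw [eR1, eR2, eR3, hρ X f]
    funext q
    have c1 := congrFun e1 q
    have c2 := congrFun e2 q
    have cA := congrFun eA q
    have cB := congrFun eB q
    have cC := congrFun eC q
    simp only [Pi.sub_apply, Pi.add_apply, Pi.mul_apply] at c1 c2 cA cB cC ⊢
    linear_combination c1 + cA - cB - cC - f q * c2


end
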